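/- A graph G has a path factor if and only if for every vertex subset S of G, the number of isolated vertices of G − S is at most 2|S|. -/

import Mathlib

open SimpleGraph

/-- A spanning subgraph each of whose components is a path of order at least 2. -/
def SimpleGraph.Subgraph.IsPathFactor {V : Type*} {G : SimpleGraph V} (F : G.Subgraph) : Prop :=
  F.verts = Set.univ ∧
    ∀ c : F.coe.ConnectedComponent,
      ∃ k : ℕ, 2 ≤ k ∧ Nonempty (F.coe.induce c.supp ≃g pathGraph k)

/-- `G` has a path factor. -/
def SimpleGraph.HasPathFactor {V : Type*} (G : SimpleGraph V) : Prop :=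
  ∃ F : G.Subgraph, F.IsPathFactor

/-- A spanning subgraph each of whose components is isomorphic to `P₂` or `P₃`. -/
def SimpleGraph.Subgraph.IsP2P3Factor {V : Type*} {G : SimpleGraph V} (F : G.Subgraph) : Prop :=
  F.verts = Set.univ ∧
    ∀ c : F.coe.ConnectedComponent,
      ∃ k : ℕ, (k = 2 ∨ k = 3) ∧ Nonempty (F.coe.induce c.supp ≃g pathGraph k)

/-- The number of isolated vertices of `G − S`. -/
noncomputable def SimpleGraph.numIsolatedOutside {V : Type*} (G : SimpleGraph V) (S : Set V) : ℕ :=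
  Nat.card {v : V | v ∉ S ∧ ∀ w, G.Adj v w → w ∈ S}

/-- The number of connected components of `G − S`. -/
noncomputable def SimpleGraph.numComponentsOutside {V : Type*} (G : SimpleGraph V) (S : Set V) : ℕ :=
  Nat.card (G.induce Sᶜ).ConnectedComponent

/-- `G` is 1-tough: any cut set `S` satisfies `|S| ≥ c(G − S)`. -/
def SimpleGraph.IsOneTough {V : Type*} [Fintype V] (G : SimpleGraph V) : Prop :=
  ∀ S : Finset V, 2 ≤ G.numComponentsOutside ↑S → G.numComponentsOutside ↑S ≤ S.card

/-- `G` is traceable: it has a Hamiltonian path. -/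
def SimpleGraph.Traceable {V : Type*} [DecidableEq V] (G : SimpleGraph V) : Prop :=
  ∃ (a b : V) (p : G.Walk a b), p.IsHamiltonian

namespace PF
variable {V : Type*} {G : SimpleGraph V}

def lvs (f : V → Option V) (c : V) : Set V := {v | v ≠ c ∧ f v = some c}

structure IsSys (G : SimpleGraph V) (f : V → Option V) : Prop where
  ctr : ∀ v u, f v = some u → f u = some u
  adj : ∀ v u, f v = some u → v ≠ u → G.Adj v u
  le_two : ∀ c, (lvs f c).ncard ≤ 2
  one_le : ∀ c, f c = some c → (lvs f c).Nonempty

def cov (f : V → Option V) : Set V := {v | f v ≠ none}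

lemma mem_lvs {f : V → Option V} {c v : V} : v ∈ lvs f c ↔ v ≠ c ∧ f v = some c := Iff.rfl

lemma lvs_congr {f g : V → Option V} {c : V} (h : ∀ v, v ≠ c → (f v = some c ↔ g v = some c)) :
    lvs f c = lvs g c := by
  ext v; simp only [lvs, Set.mem_setOf_eq]
  exact and_congr_right fun hv => h v hv

lemma some_ne_some {a b : V} (h : a ≠ b) : (some a : Option V) ≠ some b := by
  simpa using h

/-- Augmentation: an uncovered vertex `a` adjacent to a vertex `y` which is not a
2-leaf center yields a strictly larger system. -/
lemma aug [Fintype V] {f : V → Option V} (hf : IsSys G f) {a y : V} (ha : f a = none)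
    (hadj : G.Adj a y) (hy : ¬ (f y = some y ∧ (lvs f y).ncard = 2)) :
    ∃ f', IsSys G f' ∧ cov f ∪ {a} ⊆ cov f' := by
  classical
  have hay : a ≠ y := G.ne_of_adj hadj
  have hnota : ∀ v, f v ≠ some a := fun v hv => by
    have := hf.ctr v a hv; rw [ha] at this; cases this
  rcases hyv : f y with _ | d
  · -- case 1 : y uncovered; make y a center with leaf a
    have hnoty : ∀ v, f v ≠ some y := fun v hv => by
      have := hf.ctr v y hv; rw [hyv] at this; cases this
    set f' : V → Option V := fun v => if v = a ∨ v = y then some y else f v with hf'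
    have Eo : ∀ v, v ≠ a → v ≠ y → f' v = f v := by
      intro v h1 h2; simp [hf', h1, h2]
    have Ea : f' a = some y := by simp [hf']
    have Ey : f' y = some y := by simp [hf']
    have hlvsy : lvs f' y = {a} := by
      ext v
      by_cases h1 : v = a
      · subst h1; simp [lvs, Ea, hay]
      · by_cases h2 : v = y
        · subst h2; simp [lvs, hay.symm]
        · simp [lvs, Eo v h1 h2, h1, hnoty v]
    have hlvso : ∀ c, c ≠ a → c ≠ y → lvs f' c = lvs f c := by
      intro c hca hcy
      apply lvs_congr; intro v hv
      by_cases h1 : v = a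
      · subst h1; rw [Ea, ha]
        exact iff_of_false (some_ne_some (Ne.symm hcy)) (by simp)
      · by_cases h2 : v = y
        · subst h2; rw [Ey, hyv]
          exact iff_of_false (some_ne_some (Ne.symm hcy)) (by simp)
        · rw [Eo v h1 h2]
    have hlvsa : lvs f' a = ∅ := by
      ext v
      by_cases h2 : v = y
      · subst h2; simp [lvs, Ey, some_ne_some hay]
      · by_cases h1 : v = a
        · subst h1; simp [lvs]
        · simp [lvs, Eo v h1 h2, hnota v]
    refine ⟨f', ⟨?_, ?_, ?_, ?_⟩, ?_⟩
    · intro v u hv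
      by_cases h1 : v = a ∨ v = y
      · rw [hf'] at hv; simp only [h1, if_pos] at hv
        obtain rfl : y = u := Option.some_injective _ hv
        exact Ey
      · push_neg at h1
        rw [Eo v h1.1 h1.2] at hv
        have hua : u ≠ a := fun h => hnota v (h ▸ hv)
        have huy : u ≠ y := fun h => hnoty v (h ▸ hv)
        rw [Eo u hua huy]; exact hf.ctr v u hv
    · intro v u hv hvu
      by_cases h1 : v = a ∨ v = y
      · rw [hf'] at hv; simp only [h1, if_pos] at hv
        obtain rfl : y = u := Option.some_injective _ hv
        rcases h1 with rfl | rfl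
        · exact hadj
        · exact absurd rfl hvu
      · push_neg at h1
        rw [Eo v h1.1 h1.2] at hv
        exact hf.adj v u hv hvu
    · intro c
      by_cases hca : c = a
      · subst hca; rw [hlvsa]; simp
      · by_cases hcy : c = y
        · subst hcy; rw [hlvsy]; simp
        · rw [hlvso c hca hcy]; exact hf.le_two c
    · intro c hc
      by_cases hca : c = a
      · subst hca; rw [Ea] at hc
        exact absurd (Option.some_injective _ hc).symm hay
      · by_cases hcy : c = y
        · subst hcy; rw [hlvsy]; exact ⟨a, rfl⟩
        · rw [Eo c hca hcy] at hc
          rw [hlvso c hca hcy]; exact hf.one_le c hc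
    · intro v hv
      rcases hv with hv | hv
      · by_cases h1 : v = a
        · subst h1; simp [cov, Ea]
        · by_cases h2 : v = y
          · subst h2; simp [cov, Ey]
          · simpa [cov, Eo v h1 h2] using hv
      · simp only [Set.mem_singleton_iff] at hv; subst hv
        simp [cov, Ea]
  · -- y is covered, pointing at d
    by_cases hdy : d = y
    · -- case 2 : y is a center; by hy it has ≤ 1 leaf; attach a as a new leaf
      rw [hdy] at hyv
      have hyc : f y = some y := hyv
      have hl1 : (lvs f y).ncard ≤ 1 := by
        have h2 := hf.le_two y
        rcases Nat.lt_or_ge (lvs f y).ncard 2 with h | h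
        · omega
        · exact absurd ⟨hyc, le_antisymm h2 h⟩ hy
      set f' : V → Option V := fun v => if v = a then some y else f v with hf'
      have Eo : ∀ v, v ≠ a → f' v = f v := by intro v h1; simp [hf', h1]
      have Ea : f' a = some y := by simp [hf']
      have hlvsy : lvs f' y = insert a (lvs f y) := by
        ext v
        by_cases h1 : v = a
        · subst h1; simp [lvs, Ea, hay]
        · simp [lvs, Eo v h1, h1]
      have hlvso : ∀ c, c ≠ a → c ≠ y → lvs f' c = lvs f c := by
        intro c hca hcy
        apply lvs_congr; intro v hv
        by_cases h1 : v = a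
        · subst h1; rw [Ea, ha]
          exact iff_of_false (some_ne_some (Ne.symm hcy)) (by simp)
        · rw [Eo v h1]
      have hlvsa : lvs f' a = ∅ := by
        ext v
        by_cases h1 : v = a
        · subst h1; simp [lvs]
        · simp [lvs, Eo v h1, hnota v]
      refine ⟨f', ⟨?_, ?_, ?_, ?_⟩, ?_⟩
      · intro v u hv
        by_cases h1 : v = a
        · subst h1; rw [Ea] at hv
          obtain rfl : y = u := Option.some_injective _ hv
          rw [Eo y hay.symm]; exact hyc
        · rw [Eo v h1] at hv
          have hua : u ≠ a := fun h => hnota v (h ▸ hv)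
          rw [Eo u hua]; exact hf.ctr v u hv
      · intro v u hv hvu
        by_cases h1 : v = a
        · subst h1; rw [Ea] at hv
          obtain rfl : y = u := Option.some_injective _ hv
          exact hadj
        · rw [Eo v h1] at hv; exact hf.adj v u hv hvu
      · intro c
        by_cases hca : c = a
        · subst hca; rw [hlvsa]; simp
        · by_cases hcy : c = y
          · rw [hcy, hlvsy]
            calc (insert a (lvs f y)).ncard ≤ (lvs f y).ncard + 1 := Set.ncard_insert_le _ _
              _ ≤ 2 := by omega
          · rw [hlvso c hca hcy]; exact hf.le_two c
      · intro c hc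
        by_cases hca : c = a
        · subst hca; rw [Ea] at hc
          exact absurd (Option.some_injective _ hc).symm hay
        · by_cases hcy : c = y
          · subst hcy; rw [hlvsy]; exact ⟨a, Set.mem_insert _ _⟩
          · rw [Eo c hca] at hc
            rw [hlvso c hca hcy]; exact hf.one_le c hc
      · intro v hv
        rcases hv with hv | hv
        · by_cases h1 : v = a
          · subst h1; simp [cov, Ea]
          · simpa [cov, Eo v h1] using hv
        · simp only [Set.mem_singleton_iff] at hv; subst hv
          simp [cov, Ea]
    · -- case 3 : y is a leaf of center d
      have hd : f d = some d := hf.ctr y d hyv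
      have hyd : y ≠ d := fun h => hdy (h.symm)
      have had : a ≠ d := fun h => by rw [h, hd] at ha; cases ha
      have hnoty : ∀ v, f v ≠ some y := fun v hv => by
        have := hf.ctr v y hv; rw [hyv] at this
        exact hdy (Option.some_injective _ this)
      by_cases hex : ∃ z ∈ lvs f d, z ≠ y
      · -- 3a : d has another leaf z; detach y, make y a center with leaf a
        obtain ⟨z, hzd, hzy⟩ := hex
        set f' : V → Option V := fun v => if v = a ∨ v = y then some y else f v with hf'
        have Eo : ∀ v, v ≠ a → v ≠ y → f' v = f v := by
          intro v h1 h2; simp [hf', h1, h2]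
        have Ea : f' a = some y := by simp [hf']
        have Ey : f' y = some y := by simp [hf']
        have hlvsy : lvs f' y = {a} := by
          ext v
          by_cases h1 : v = a
          · subst h1; simp [lvs, Ea, hay]
          · by_cases h2 : v = y
            · subst h2; simp [lvs, hay.symm]
            · simp [lvs, Eo v h1 h2, h1, hnoty v]
        have hlvsd : lvs f' d = lvs f d \ {y} := by
          ext v
          by_cases h1 : v = a
          · subst h1
            simp [lvs, Ea, ha, some_ne_some hyd]
          · by_cases h2 : v = y
            · subst h2; simp [lvs, Ey, some_ne_some hyd]
            · simp only [lvs, Set.mem_setOf_eq, Set.mem_diff, Set.mem_singleton_iff,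
                Eo v h1 h2, h2, and_true]
              tauto
        have hlvso : ∀ c, c ≠ a → c ≠ y → c ≠ d → lvs f' c = lvs f c := by
          intro c hca hcy hcd
          apply lvs_congr; intro v hv
          by_cases h1 : v = a
          · subst h1; rw [Ea, ha]
            exact iff_of_false (some_ne_some (Ne.symm hcy)) (by simp)
          · by_cases h2 : v = y
            · subst h2; rw [Ey, hyv]
              exact iff_of_false (some_ne_some (Ne.symm hcy)) (some_ne_some (Ne.symm hcd))
            · rw [Eo v h1 h2]
        have hlvsa : lvs f' a = ∅ := by
          ext v
          by_cases h2 : v = y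
          · subst h2; simp [lvs, Ey, some_ne_some hay]
          · by_cases h1 : v = a
            · subst h1; simp [lvs]
            · simp [lvs, Eo v h1 h2, hnota v]
        refine ⟨f', ⟨?_, ?_, ?_, ?_⟩, ?_⟩
        · intro v u hv
          by_cases h1 : v = a ∨ v = y
          · rw [hf'] at hv; simp only [h1, if_pos] at hv
            obtain rfl : y = u := Option.some_injective _ hv
            exact Ey
          · push_neg at h1
            rw [Eo v h1.1 h1.2] at hv
            have hua : u ≠ a := fun h => hnota v (h ▸ hv)
            have huy : u ≠ y := fun h => hnoty v (h ▸ hv)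
            rw [Eo u hua huy]; exact hf.ctr v u hv
        · intro v u hv hvu
          by_cases h1 : v = a ∨ v = y
          · rw [hf'] at hv; simp only [h1, if_pos] at hv
            obtain rfl : y = u := Option.some_injective _ hv
            rcases h1 with rfl | rfl
            · exact hadj
            · exact absurd rfl hvu
          · push_neg at h1
            rw [Eo v h1.1 h1.2] at hv
            exact hf.adj v u hv hvu
        · intro c
          by_cases hca : c = a
          · subst hca; rw [hlvsa]; simp
          · by_cases hcy : c = y
            · rw [hcy, hlvsy]; simp
            · by_cases hcd : c = d
              · rw [hcd, hlvsd]
                exact le_trans (Set.ncard_le_ncard Set.diff_subset (Set.toFinite _))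
                  (hf.le_two d)
              · rw [hlvso c hca hcy hcd]; exact hf.le_two c
        · intro c hc
          by_cases hca : c = a
          · subst hca; rw [Ea] at hc
            exact absurd (Option.some_injective _ hc).symm hay
          · by_cases hcy : c = y
            · rw [hcy, hlvsy]; exact ⟨a, rfl⟩
            · by_cases hcd : c = d
              · rw [hcd, hlvsd]; exact ⟨z, hzd, hzy⟩
              · rw [hlvso c hca hcy hcd]
                rw [Eo c hca hcy] at hc
                exact hf.one_le c hc
        · intro v hv
          rcases hv with hv | hv
          · by_cases h1 : v = a
            · subst h1; simp [cov, Ea]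
            · by_cases h2 : v = y
              · subst h2; simp [cov, Ey]
              · simpa [cov, Eo v h1 h2] using hv
          · simp only [Set.mem_singleton_iff] at hv; subst hv
            simp [cov, Ea]
      · -- 3b : y is the only leaf of d; make y center of {a, d}
        push_neg at hex
        have hadjdy : G.Adj d y := (hf.adj y d hyv hyd).symm
        have honly : ∀ v, v ≠ d → f v = some d → v = y := fun v h1 h2 => hex v ⟨h1, h2⟩
        set f' : V → Option V := fun v => if v = a ∨ v = d ∨ v = y then some y else f v with hf'
        have Eo : ∀ v, v ≠ a → v ≠ d → v ≠ y → f' v = f v := by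
          intro v h1 h2 h3; simp [hf', h1, h2, h3]
        have Ea : f' a = some y := by simp [hf']
        have Ed : f' d = some y := by simp [hf']
        have Ey : f' y = some y := by simp [hf']
        have hlvsy : lvs f' y = {a, d} := by
          ext v
          by_cases h1 : v = a
          · subst h1; simp [lvs, Ea, hay]
          · by_cases h2 : v = d
            · subst h2; simp [lvs, Ed, hdy]
            · by_cases h3 : v = y
              · subst h3; simp [lvs, hay.symm, hyd, Ne.symm hdy]
              · simp [lvs, Eo v h1 h2 h3, h1, h2, hnoty v]
        have hlvsd : lvs f' d = ∅ := by
          ext v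
          by_cases h1 : v = a
          · subst h1; simp [lvs, Ea, some_ne_some hyd]
          · by_cases h2 : v = d
            · subst h2; simp [lvs]
            · by_cases h3 : v = y
              · subst h3; simp [lvs, Ey, some_ne_some hyd]
              · simp only [lvs, Set.mem_setOf_eq, Eo v h1 h2 h3, Set.mem_empty_iff_false,
                  iff_false, not_and]
                intro hvd hfv; exact h3 (honly v hvd hfv)
        have hlvsa : lvs f' a = ∅ := by
          ext v
          by_cases h1 : v = a
          · subst h1; simp [lvs]
          · by_cases h2 : v = d
            · subst h2; simp [lvs, Ed, Ne.symm hay]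
            · by_cases h3 : v = y
              · subst h3; simp [lvs, Ey, Ne.symm hay]
              · simp [lvs, Eo v h1 h2 h3, hnota v]
        have hlvso : ∀ c, c ≠ a → c ≠ d → c ≠ y → lvs f' c = lvs f c := by
          intro c hca hcd hcy
          apply lvs_congr; intro v hv
          by_cases h1 : v = a
          · subst h1; rw [Ea, ha]
            exact iff_of_false (some_ne_some (Ne.symm hcy)) (by simp)
          · by_cases h2 : v = d
            · subst h2; rw [Ed, hd]
              exact iff_of_false (some_ne_some (Ne.symm hcy)) (some_ne_some (Ne.symm hcd))
            · by_cases h3 : v = y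
              · subst h3; rw [Ey, hyv]
                exact iff_of_false (some_ne_some (Ne.symm hcy)) (some_ne_some (Ne.symm hcd))
              · rw [Eo v h1 h2 h3]
        refine ⟨f', ⟨?_, ?_, ?_, ?_⟩, ?_⟩
        · intro v u hv
          by_cases h1 : v = a ∨ v = d ∨ v = y
          · rw [hf'] at hv; simp only [h1, if_pos] at hv
            obtain rfl : y = u := Option.some_injective _ hv
            exact Ey
          · push_neg at h1
            rw [Eo v h1.1 h1.2.1 h1.2.2] at hv
            have hua : u ≠ a := fun h => hnota v (h ▸ hv)
            have huy : u ≠ y := fun h => hnoty v (h ▸ hv)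
            have hud : u ≠ d := by
              intro h; subst h
              exact h1.2.2 (honly v (by exact fun hh => h1.2.1 hh) hv)
            rw [Eo u hua hud huy]; exact hf.ctr v u hv
        · intro v u hv hvu
          by_cases h1 : v = a ∨ v = d ∨ v = y
          · rw [hf'] at hv; simp only [h1, if_pos] at hv
            obtain rfl : y = u := Option.some_injective _ hv
            rcases h1 with rfl | rfl | rfl
            · exact hadj
            · exact hadjdy
            · exact absurd rfl hvu
          · push_neg at h1
            rw [Eo v h1.1 h1.2.1 h1.2.2] at hv
            exact hf.adj v u hv hvu
        · intro c
          by_cases hca : c = a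
          · subst hca; rw [hlvsa]; simp
          · by_cases hcd : c = d
            · rw [hcd, hlvsd]; simp
            · by_cases hcy : c = y
              · rw [hcy, hlvsy]
                exact le_trans (Set.ncard_insert_le _ _) (by simp)
              · rw [hlvso c hca hcd hcy]; exact hf.le_two c
        · intro c hc
          by_cases hca : c = a
          · subst hca; rw [Ea] at hc
            exact absurd (Option.some_injective _ hc).symm hay
          · by_cases hcd : c = d
            · rw [hcd, Ed] at hc
              exact absurd (Option.some_injective _ hc) hyd
            · by_cases hcy : c = y
              · rw [hcy, hlvsy]; exact ⟨a, by simp⟩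
              · rw [hlvso c hca hcd hcy]
                rw [Eo c hca hcd hcy] at hc
                exact hf.one_le c hc
        · intro v hv
          rcases hv with hv | hv
          · by_cases h1 : v = a
            · subst h1; simp [cov, Ea]
            · by_cases h2 : v = d
              · subst h2; simp [cov, Ed]
              · by_cases h3 : v = y
                · subst h3; simp [cov, Ey]
                · simpa [cov, Eo v h1 h2 h3] using hv
          · simp only [Set.mem_singleton_iff] at hv; subst hv
            simp [cov, Ea]

/-- Swap: if `x` is uncovered and adjacent to a center `c` with leaf `a`, we may re-cover
`x` instead of `a`, preserving centers and leaf-counts. -/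
lemma swap [Fintype V] {f : V → Option V} (hf : IsSys G f) {x c a : V}
    (hx : f x = none) (hadj : G.Adj x c) (hc : f c = some c) (hac : a ≠ c)
    (hal : f a = some c) :
    ∃ f', IsSys G f' ∧
      (∀ v, f' v = none ↔ ((f v = none ∧ v ≠ x) ∨ v = a)) ∧
      (∀ v, f' v = some v ↔ f v = some v) ∧
      (∀ v, f v = some v → (lvs f' v).ncard = (lvs f v).ncard) ∧
      (∀ v, v ≠ x → v ≠ a → f' v = f v) := by
  classical
  have hxa : x ≠ a := fun h => by rw [h, hal] at hx; cases hx
  have hxc : x ≠ c := fun h => by rw [h, hc] at hx; cases hx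
  have hnota : ∀ v, f v ≠ some a := fun v hv => by
    have := hf.ctr v a hv; rw [hal] at this
    exact hac (Option.some_injective _ this).symm
  have hnotx : ∀ v, f v ≠ some x := fun v hv => by
    have := hf.ctr v x hv; rw [hx] at this; cases this
  set f' : V → Option V := fun v => if v = a then none else if v = x then some c else f v
    with hf'
  have Ea : f' a = none := by simp [hf']
  have Ex : f' x = some c := by simp [hf', hxa]
  have Eo : ∀ v, v ≠ x → v ≠ a → f' v = f v := by intro v h1 h2; simp [hf', h1, h2]
  have hmema : a ∈ lvs f c := ⟨hac, hal⟩
  have hlvsc : lvs f' c = insert x (lvs f c \ {a}) := by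
    ext v
    by_cases h1 : v = a
    · subst h1; simp [lvs, Ea, hxa.symm]
    · by_cases h2 : v = x
      · subst h2; simp [lvs, Ex, hxc]
      · simp only [lvs, Set.mem_setOf_eq, Eo v h2 h1, Set.mem_insert_iff, Set.mem_diff,
          Set.mem_singleton_iff, h1, h2, and_true, false_or, not_false_iff]
  have hlvso : ∀ c', c' ≠ c → lvs f' c' = lvs f c' := by
    intro c' hc'
    apply lvs_congr; intro v hv
    by_cases h1 : v = a
    · subst h1; rw [Ea, hal]
      exact iff_of_false (by simp) (some_ne_some (Ne.symm hc'))
    · by_cases h2 : v = x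
      · subst h2; rw [Ex, hx]
        exact iff_of_false (some_ne_some (Ne.symm hc')) (by simp)
      · rw [Eo v h2 h1]
  have hx_not : x ∉ lvs f c \ {a} := fun h => by
    have := h.1.2; rw [hx] at this; cases this
  have hncc : (lvs f' c).ncard = (lvs f c).ncard := by
    rw [hlvsc, Set.ncard_insert_of_notMem hx_not (Set.toFinite _),
      Set.ncard_diff_singleton_of_mem hmema]
    have : 0 < (lvs f c).ncard := (Set.ncard_pos (Set.toFinite _)).2 ⟨a, hmema⟩
    omega
  refine ⟨f', ⟨?_, ?_, ?_, ?_⟩, ?_, ?_, ?_, ?_⟩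
  · intro v u hv
    by_cases h1 : v = a
    · subst h1; rw [Ea] at hv; cases hv
    · by_cases h2 : v = x
      · subst h2; rw [Ex] at hv
        obtain rfl : c = u := Option.some_injective _ hv
        rw [Eo c hxc.symm (Ne.symm hac)]; exact hc
      · rw [Eo v h2 h1] at hv
        have hua : u ≠ a := fun h => hnota v (h ▸ hv)
        have hux : u ≠ x := fun h => hnotx v (h ▸ hv)
        rw [Eo u hux hua]; exact hf.ctr v u hv
  · intro v u hv hvu
    by_cases h1 : v = a
    · subst h1; rw [Ea] at hv; cases hv
    · by_cases h2 : v = x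
      · subst h2; rw [Ex] at hv
        obtain rfl : c = u := Option.some_injective _ hv
        exact hadj
      · rw [Eo v h2 h1] at hv; exact hf.adj v u hv hvu
  · intro c'
    by_cases hc' : c' = c
    · rw [hc', hncc]; exact hf.le_two c
    · rw [hlvso c' hc']; exact hf.le_two c'
  · intro c' hcc
    by_cases hc' : c' = c
    · subst hc'; rw [hlvsc]; exact ⟨x, Set.mem_insert _ _⟩
    · have h1 : c' ≠ a := fun h => by rw [h, Ea] at hcc; cases hcc
      have h2 : c' ≠ x := fun h => by
        rw [h, Ex] at hcc
        exact hxc (Option.some_injective _ hcc).symm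
      rw [Eo c' h2 h1] at hcc
      rw [hlvso c' hc']; exact hf.one_le c' hcc
  · intro v
    by_cases h1 : v = a
    · subst h1; rw [Ea, hal]; simp
    · by_cases h2 : v = x
      · subst h2; rw [Ex, hx]; simp [h1]
      · rw [Eo v h2 h1]; simp [h1, h2]
  · intro v
    by_cases h1 : v = a
    · subst h1; rw [Ea, hal]
      exact iff_of_false (by simp) (some_ne_some (Ne.symm hac))
    · by_cases h2 : v = x
      · subst h2; rw [Ex, hx]
        exact iff_of_false (some_ne_some hxc.symm) (by simp)
      · rw [Eo v h2 h1]
  · intro v hctr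
    have h1 : v ≠ a := fun h => hnota v (by rw [← h]; exact hctr) |>.elim
    have h2 : v ≠ x := fun h => by rw [h, hx] at hctr; cases hctr
    by_cases hc' : v = c
    · rw [hc']; exact hncc
    · rw [hlvso v hc']
  · exact fun v h2 h1 => Eo v h2 h1


/-- `c` is a center with exactly two leaves. -/
def ctr2 (f : V → Option V) (c : V) : Prop := f c = some c ∧ (lvs f c).ncard = 2

/-- Chains of two-leaf centers reaching out from the uncovered vertex `w`,
listed in reverse order (head is the far end). -/
inductive RCh (G : SimpleGraph V) (f : V → Option V) (w : V) : List V → Prop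
  | base (c : V) : G.Adj w c → ctr2 f c → RCh G f w [c]
  | step (c' c : V) (ℓ : List V) (a : V) : RCh G f w (c :: ℓ) → a ≠ c → f a = some c →
      G.Adj a c' → ctr2 f c' → RCh G f w (c' :: c :: ℓ)

lemma RCh.suffix {f : V → Option V} {w : V} {L L' : List V} (h : RCh G f w L)
    (hs : L' <:+ L) (hne : L' ≠ []) : RCh G f w L' := by
  induction h with
  | base c h1 h2 =>
    rcases List.suffix_cons_iff.1 hs with rfl | h
    · exact RCh.base c h1 h2
    · exact absurd (List.suffix_nil.1 h) hne
  | step c' c ℓ a hch h1 h2 h3 h4 ih =>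
    rcases List.suffix_cons_iff.1 hs with rfl | h
    · exact RCh.step c' c ℓ a hch h1 h2 h3 h4
    · exact ih h

lemma RCh.head_ctr2 {f : V → Option V} {w c : V} {ℓ : List V} (h : RCh G f w (c :: ℓ)) :
    ctr2 f c := by
  cases h with
  | base _ h1 h2 => exact h2
  | step _ _ _ a h1 h2 h3 h4 h5 => exact h5

lemma exists_suffix_of_mem {α : Type*} {a : α} {L : List α} (h : a ∈ L) :
    ∃ t, (a :: t) <:+ L := by
  induction L with
  | nil => simp at h
  | cons b L ih =>
    rcases List.mem_cons.1 h with rfl | h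
    · exact ⟨L, List.suffix_refl _⟩
    · obtain ⟨t, ht⟩ := ih h
      exact ⟨t, ht.trans (List.suffix_cons _ _)⟩

lemma RCh.nodup {f : V → Option V} {w : V} {L : List V} (h : RCh G f w L) :
    ∃ L', RCh G f w L' ∧ L'.Nodup ∧ L'.head? = L.head? := by
  induction h with
  | base c h1 h2 => exact ⟨[c], RCh.base c h1 h2, List.nodup_singleton c, rfl⟩
  | step c' c ℓ a hch h1 h2 h3 h4 ih =>
    obtain ⟨L₁, hL₁, hnd, hhd⟩ := ih
    rcases L₁ with _ | ⟨c₁, ℓ₁⟩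
    · simp at hhd
    · have hcc : c₁ = c := by simpa using hhd
      rw [hcc] at hL₁ hnd
      by_cases hmem : c' ∈ c :: ℓ₁
      · obtain ⟨t, ht⟩ := exists_suffix_of_mem hmem
        exact ⟨c' :: t, hL₁.suffix ht (by simp), hnd.sublist ht.sublist, rfl⟩
      · exact ⟨c' :: c :: ℓ₁, RCh.step c' c ℓ₁ a hL₁ h1 h2 h3 h4,
          List.nodup_cons.2 ⟨hmem, hnd⟩, rfl⟩

/-- Exposure: given a nodup chain from `w` ending at `c`, any leaf `a` of `c` can be
exposed, covering `w` instead, preserving centers and leaf counts. -/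
lemma expose [Fintype V] {f : V → Option V} {w : V} (hf : IsSys G f) (hw : f w = none)
    {L : List V} (hL : RCh G f w L) (hnd : L.Nodup) :
    ∀ c, L.head? = some c → ∀ a, a ≠ c → f a = some c →
    ∃ f', IsSys G f' ∧
      (∀ v, f' v = none ↔ ((f v = none ∧ v ≠ w) ∨ v = a)) ∧
      (∀ v, f' v = some v ↔ f v = some v) ∧
      (∀ v, f v = some v → (lvs f' v).ncard = (lvs f v).ncard) ∧
      (∀ v, v ≠ w → (∀ d ∈ L, f v ≠ some d) → f' v = f v) := by
  induction hL with
  | base c hadj hc2 =>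
    intro c₀ hc₀ a hac hal
    obtain rfl : c = c₀ := by simpa using hc₀
    obtain ⟨f', h1, h2, h3, h4, h5⟩ := swap hf hw hadj hc2.1 hac hal
    refine ⟨f', h1, h2, h3, h4, fun v hvw hvd => h5 v hvw fun hva => ?_⟩
    exact hvd c (by simp) (hva ▸ hal)
  | step c' c ℓ a₀ hch ha₀c hfa₀ hadj₀ hc'2 ih =>
    intro c₀ hc₀ a hac hal
    obtain rfl : c' = c₀ := by simpa using hc₀
    have hnd' : (c :: ℓ).Nodup := (List.nodup_cons.1 hnd).2
    have hc'notin : c' ∉ c :: ℓ := (List.nodup_cons.1 hnd).1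
    have hc'c : c' ≠ c := fun h => hc'notin (h ▸ List.mem_cons_self)
    obtain ⟨f₁, hf₁, hcov₁, hctr₁, hncd₁, hpres₁⟩ := ih hnd' c rfl a₀ ha₀c hfa₀
    -- facts about f₁
    have haw : a ≠ w := fun h => by rw [h, hw] at hal; cases hal
    have ha₀w : a₀ ≠ w := fun h => by rw [h, hw] at hfa₀; cases hfa₀
    have haa₀ : a ≠ a₀ := fun h => by
      rw [h, hfa₀] at hal
      exact hc'c (Option.some_injective _ hal).symm
    have hf₁a : f₁ a = some c' := by
      have : f₁ a = f a := hpres₁ a haw fun d hd hfd => by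
        rw [hal] at hfd
        exact hc'notin ((Option.some_injective _ hfd) ▸ hd)
      rw [this, hal]
    have hf₁c' : f₁ c' = some c' := (hctr₁ c').2 hc'2.1
    have hf₁a₀ : f₁ a₀ = none := (hcov₁ a₀).2 (Or.inr rfl)
    obtain ⟨f₂, hs1, hs2, hs3, hs4, hs5⟩ := swap hf₁ hf₁a₀ hadj₀ hf₁c' hac hf₁a
    refine ⟨f₂, hs1, ?_, ?_, ?_, ?_⟩
    · intro v
      rw [hs2 v, hcov₁ v]
      constructor
      · rintro (⟨h1, h2⟩ | rfl)
        · rcases h1 with ⟨h1, h3⟩ | rfl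
          · exact Or.inl ⟨h1, h3⟩
          · exact absurd rfl h2
        · exact Or.inr rfl
      · rintro (⟨h1, h2⟩ | rfl)
        · exact Or.inl ⟨Or.inl ⟨h1, h2⟩, fun h => by rw [h, hfa₀] at h1; cases h1⟩
        · exact Or.inr rfl
    · intro v; rw [hs3 v, hctr₁ v]
    · intro v hv
      rw [hs4 v ((hctr₁ v).2 hv), hncd₁ v hv]
    · intro v hvw hvd
      have hva₀ : v ≠ a₀ := fun h => hvd c (by simp) (h ▸ hfa₀)
      have hva : v ≠ a := fun h => hvd c' (by simp) (h ▸ hal)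
      rw [hs5 v hva₀ hva]
      exact hpres₁ v hvw fun d hd => hvd d (List.mem_cons_of_mem _ hd)


lemma exists_total [Fintype V]
    (H : ∀ S : Finset V, G.numIsolatedOutside ↑S ≤ 2 * S.card) :
    ∃ f, IsSys G f ∧ ∀ v, f v ≠ none := by
  classical
  set P : ℕ → Prop := fun n => ∃ f : V → Option V, IsSys G f ∧ (cov f).ncard = n with hP
  have hP0 : P 0 := by
    refine ⟨fun _ => none, ⟨?_, ?_, ?_, ?_⟩, ?_⟩
    · intro v u hv; cases hv
    · intro v u hv; cases hv
    · intro c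
      have : lvs (fun _ => none) c = (∅ : Set V) := by
        ext v; simp [lvs]
      rw [this]; simp
    · intro c hc; cases hc
    · have : cov (fun _ : V => none) = (∅ : Set V) := by ext v; simp [cov]
      rw [this]; simp
  set N := Nat.findGreatest P (Fintype.card V) with hN
  have hPN : P N := Nat.findGreatest_spec (Nat.zero_le _) hP0
  have hmax : ∀ g : V → Option V, IsSys G g → (cov g).ncard ≤ N := by
    intro g hg
    refine Nat.le_findGreatest ?_ ⟨g, hg, rfl⟩
    calc (cov g).ncard ≤ (Set.univ : Set V).ncard :=
          Set.ncard_le_ncard (Set.subset_univ _) (Set.toFinite _)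
      _ = Fintype.card V := by rw [Set.ncard_univ, Nat.card_eq_fintype_card]
  obtain ⟨f, hf, hcard⟩ := hPN
  refine ⟨f, hf, fun w hw => ?_⟩
  -- `w` is uncovered; derive a contradiction
  -- Step A : every neighbor of `w` is a 2-leaf center
  have hA : ∀ y, G.Adj w y → ctr2 f y := by
    intro y hadj
    by_contra hy
    obtain ⟨f', hf', hsub⟩ := aug hf hw hadj hy
    have hlt : (cov f).ncard < (cov f').ncard := by
      refine Set.ncard_lt_ncard ⟨fun v hv => hsub (Or.inl hv), fun hsup => ?_⟩ (Set.toFinite _)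
      have hwmem : w ∈ cov f' := hsub (Or.inr rfl)
      exact (hsup hwmem) hw
    exact absurd (hmax f' hf') (by omega)
  set Reach : V → Prop := fun c => ∃ ℓ, RCh G f w (c :: ℓ) with hReach
  have hR2 : ∀ c, Reach c → ctr2 f c := fun c ⟨ℓ, h⟩ => h.head_ctr2
  -- Step B : every neighbor of a leaf of a reachable center is reachable
  have hB : ∀ c, Reach c → ∀ a, a ≠ c → f a = some c → ∀ y, G.Adj a y → Reach y := by
    intro c hc a ha hfa y hadj
    by_cases hy2 : ctr2 f y
    · obtain ⟨ℓ, hch⟩ := hc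
      exact ⟨c :: ℓ, RCh.step y c ℓ a hch ha hfa hadj hy2⟩
    · exfalso
      obtain ⟨ℓ, hch⟩ := hc
      obtain ⟨L', hL', hnd', hhd⟩ := hch.nodup
      rcases L' with _ | ⟨c₁, ℓ₁⟩
      · simp at hhd
      · have hcc : c₁ = c := by simpa using hhd
        rw [hcc] at hL' hnd'
        obtain ⟨f₁, hf₁, hcov₁, hctr₁, hncd₁, hpres₁⟩ :=
          expose hf hw hL' hnd' c rfl a ha hfa
        have hf₁a : f₁ a = none := (hcov₁ a).2 (Or.inr rfl)
        have hy2' : ¬ (f₁ y = some y ∧ (lvs f₁ y).ncard = 2) := by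
          rintro ⟨h1, h2⟩
          have h3 : f y = some y := (hctr₁ y).1 h1
          exact hy2 ⟨h3, by rw [← hncd₁ y h3, h2]⟩
        obtain ⟨f₂, hf₂, hsub⟩ := aug hf₁ hf₁a hadj hy2'
        -- size computations
        have haw : a ≠ w := fun h => by rw [h, hw] at hfa; cases hfa
        have hacov : a ∈ cov f := fun h => by rw [hfa] at h; cases h
        have hwcov : w ∉ cov f := fun h => h hw
        have hcov₁eq : cov f₁ = (cov f ∪ {w}) \ {a} := by
          ext v
          simp only [cov, Set.mem_setOf_eq, Set.mem_diff, Set.mem_union,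
            Set.mem_singleton_iff]
          have hiff := hcov₁ v
          constructor
          · intro hv
            refine ⟨?_, fun h => hv (hiff.2 (Or.inr h))⟩
            by_cases hvw : v = w
            · exact Or.inr hvw
            · exact Or.inl fun hfv => hv (hiff.2 (Or.inl ⟨hfv, hvw⟩))
          · rintro ⟨h1, h2⟩ hv
            rcases hiff.1 hv with ⟨h3, h4⟩ | h3
            · rcases h1 with h1 | h1
              · exact h1 h3
              · exact h4 h1
            · exact h2 h3
        have hsize1 : (cov f₁).ncard = (cov f).ncard := by
          rw [hcov₁eq, Set.union_singleton,
            Set.ncard_diff_singleton_of_mem (Set.mem_insert_of_mem _ hacov),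
            Set.ncard_insert_of_notMem hwcov (Set.toFinite _)]
          omega
        have hanotcov : a ∉ cov f₁ := by
          rw [hcov₁eq]; exact fun h => h.2 rfl
        have hlt : (cov f₁).ncard < (cov f₂).ncard := by
          refine Set.ncard_lt_ncard ⟨fun v hv => hsub (Or.inl hv), fun hsup => ?_⟩
            (Set.toFinite _)
          exact hanotcov (hsup (hsub (Or.inr rfl)))
        have := hmax f₂ hf₂
        omega
  -- Step C : counting
  have hwS : ∀ u, G.Adj w u → Reach u := fun u h => ⟨[], RCh.base u h (hA u h)⟩
  set S : Finset V := (Set.toFinite {c | Reach c}).toFinset with hSdef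
  have hSmem : ∀ c, c ∈ S ↔ Reach c := by intro c; simp [hSdef]
  set T : Finset V := S.biUnion (fun c => (Set.toFinite (lvs f c)).toFinset) with hTdef
  have hTmem : ∀ v, v ∈ T ↔ ∃ c ∈ S, v ∈ lvs f c := by
    intro v; simp [hTdef, Set.Finite.mem_toFinset, lvs]
  have hTcard : T.card = 2 * S.card := by
    have hdisj : ∀ c₁ ∈ S, ∀ c₂ ∈ S, c₁ ≠ c₂ →
        Disjoint ((Set.toFinite (lvs f c₁)).toFinset) ((Set.toFinite (lvs f c₂)).toFinset) := by
      intro c₁ h₁ c₂ h₂ hne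
      refine Finset.disjoint_left.2 fun v hv₁ hv₂ => ?_
      rw [Set.Finite.mem_toFinset] at hv₁ hv₂
      exact hne (Option.some_injective _ (hv₁.2.symm.trans hv₂.2))
    have hcards : ∀ c ∈ S, ((Set.toFinite (lvs f c)).toFinset).card = 2 := by
      intro c hc
      rw [← Set.ncard_eq_toFinset_card]
      exact (hR2 c ((hSmem c).1 hc)).2
    rw [hTdef, Finset.card_biUnion hdisj, Finset.sum_congr rfl hcards, Finset.sum_const,
      smul_eq_mul, mul_comm]
  have hwT : w ∉ T := by
    intro h
    obtain ⟨c, _, hc⟩ := (hTmem w).1 h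
    have h2 : f w = some c := (mem_lvs.1 hc).2
    rw [hw] at h2; cases h2
  have hsub : ↑(insert w T) ⊆ {v : V | v ∉ (↑S : Set V) ∧ ∀ u, G.Adj v u → u ∈ (↑S : Set V)} := by
    intro v hv
    simp only [Finset.coe_insert, Set.mem_insert_iff, Finset.mem_coe] at hv
    rcases hv with rfl | hv
    · refine ⟨fun h => ?_, fun u hu => ?_⟩
      · have := (hR2 v ((hSmem v).1 h)).1
        rw [hw] at this; cases this
      · exact (hSmem u).2 (hwS u hu)
    · obtain ⟨c, hcS, hvc⟩ := (hTmem v).1 hv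
      refine ⟨fun h => ?_, fun u hu => ?_⟩
      · have := (hR2 v ((hSmem v).1 h)).1
        rw [hvc.2] at this
        exact hvc.1 (Option.some_injective _ this).symm
      · exact (hSmem u).2 (hB c ((hSmem c).1 hcS) v hvc.1 hvc.2 u hu)
  have hle : (insert w T).card ≤ G.numIsolatedOutside ↑S := by
    rw [SimpleGraph.numIsolatedOutside, Nat.card_coe_set_eq]
    calc (insert w T).card = (↑(insert w T) : Set V).ncard := (Set.ncard_coe_finset _).symm
      _ ≤ _ := Set.ncard_le_ncard hsub (Set.toFinite _)
  have hcard_ins : (insert w T).card = 2 * S.card + 1 := by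
    rw [Finset.card_insert_of_notMem hwT, hTcard]
  have := H S
  omega


lemma hasPathFactor_of_sys [Fintype V] {f : V → Option V} (hf : IsSys G f)
    (htot : ∀ v, f v ≠ none) : G.HasPathFactor := by
  classical
  have hex : ∀ v : V, ∃ c, f v = some c := by
    intro v
    cases hv : f v with
    | none => exact absurd hv (htot v)
    | some c => exact ⟨c, rfl⟩
  choose ct hct using hex
  have hctr : ∀ v, f (ct v) = some (ct v) := fun v => hf.ctr v (ct v) (hct v)
  have hctc : ∀ v, ct (ct v) = ct v := fun v =>
    Option.some_injective _ ((hct (ct v)).symm.trans (hctr v))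
  have hctofc : ∀ v c, f v = some c → ct v = c := fun v c h =>
    Option.some_injective _ ((hct v).symm.trans h)
  set F : G.Subgraph := {
    verts := Set.univ
    Adj := fun v u => v ≠ u ∧ (f v = some u ∨ f u = some v)
    adj_sub := by
      rintro v u ⟨hne, h | h⟩
      · exact hf.adj v u h hne
      · exact (hf.adj u v h (Ne.symm hne)).symm
    edge_vert := fun _ => trivial
    symm := ⟨by
      rintro v u ⟨hne, h | h⟩
      · exact ⟨Ne.symm hne, Or.inr h⟩
      · exact ⟨Ne.symm hne, Or.inl h⟩⟩ } with hFdef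
  have hFadj : ∀ v u : V, F.Adj v u ↔ (v ≠ u ∧ (f v = some u ∨ f u = some v)) := fun v u =>
    Iff.rfl
  have hcoe : ∀ x y : F.verts, F.coe.Adj x y ↔ F.Adj x.1 y.1 := fun x y => Iff.rfl
  -- adjacency preserves centers
  have hadjct : ∀ v u : V, F.Adj v u → ct v = ct u := by
    rintro v u ⟨hne, h | h⟩
    · rw [hctofc v u h, hctofc u u (hf.ctr v u h)]
    · rw [hctofc u v h, hctofc v v (hf.ctr u v h)]
  have hwalk : ∀ x y : F.verts, F.coe.Reachable x y → ct x.1 = ct y.1 := by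
    intro x y hr
    obtain ⟨p⟩ := hr
    induction p with
    | nil => rfl
    | cons h p ih => exact (hadjct _ _ ((hcoe _ _).1 h)).trans ih
  have hreach : ∀ x : F.verts, F.coe.Reachable x ⟨ct x.1, trivial⟩ := by
    intro x
    by_cases hx : x.1 = ct x.1
    · have : x = (⟨ct x.1, trivial⟩ : F.verts) := Subtype.ext hx
      rw [← this]
    · exact Adj.reachable ((hcoe _ _).2 ⟨hx, Or.inl (hct x.1)⟩)
  refine ⟨F, rfl, fun C => ?_⟩
  obtain ⟨x₀, hx₀⟩ := C.exists_rep
  have hx₀ : F.coe.connectedComponentMk x₀ = C := hx₀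
  set c : V := ct x₀.1 with hc
  have hcc : ct c = c := hctc _
  have hfc : f c = some c := hctr _
  -- supp characterization
  have hmemsupp : ∀ x : F.verts, x ∈ C.supp ↔ ct x.1 = c := by
    intro x
    rw [ConnectedComponent.mem_supp_iff, ← hx₀]
    rw [ConnectedComponent.eq]
    constructor
    · exact fun h => hwalk _ _ h
    · intro h
      refine (hreach x).trans ?_
      rw [h]
      exact ((hreach x₀).mono le_rfl).symm
  have hone : 1 ≤ (lvs f c).ncard :=
    (Set.ncard_pos (Set.toFinite _)).2 (hf.one_le c hfc)
  have htwo : (lvs f c).ncard ≤ 2 := hf.le_two c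
  interval_cases hnl : (lvs f c).ncard
  · -- one leaf : component is P₂
    obtain ⟨a, hlvs⟩ := Set.ncard_eq_one.1 hnl
    have hmema : a ∈ lvs f c := hlvs ▸ rfl
    obtain ⟨hac, hfa⟩ := hmema
    have hcta : ct a = c := hctofc a c hfa
    have hchar : ∀ v : V, ct v = c ↔ (v = c ∨ v = a) := by
      intro v
      constructor
      · intro h
        by_cases hvc : v = c
        · exact Or.inl hvc
        · right
          have : v ∈ lvs f c := ⟨hvc, h ▸ hct v⟩
          rwa [hlvs, Set.mem_singleton_iff] at this
      · rintro (rfl | rfl)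
        · exact hcc
        · exact hcta
    have hcmem : (⟨c, trivial⟩ : F.verts) ∈ C.supp := (hmemsupp _).2 hcc
    have hamem : (⟨a, trivial⟩ : F.verts) ∈ C.supp := (hmemsupp _).2 hcta
    refine ⟨2, le_refl 2, ⟨⟨⟨fun z => if z.1.1 = c then (0 : Fin 2) else 1,
      fun i => if i = 0 then ⟨⟨c, trivial⟩, hcmem⟩ else ⟨⟨a, trivial⟩, hamem⟩, ?_, ?_⟩, ?_⟩⟩⟩
    · intro z
      rcases (hchar z.1.1).1 ((hmemsupp z.1).1 z.2) with h1 | h1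
      · simp only [h1, if_pos rfl]
        exact Subtype.ext (Subtype.ext h1.symm)
      · simp only [h1, if_neg hac, if_neg one_ne_zero]
        exact Subtype.ext (Subtype.ext h1.symm)
    · intro i
      fin_cases i
      · simp
      · simp [hac]
    · intro z z'
      show (pathGraph 2).Adj _ _ ↔ F.Adj z.1.1 z'.1.1
      simp only [Equiv.coe_fn_mk]
      rcases (hchar z.1.1).1 ((hmemsupp z.1).1 z.2) with h1 | h1 <;>
        rcases (hchar z'.1.1).1 ((hmemsupp z'.1).1 z'.2) with h2 | h2 <;>
        rw [h1, h2] <;> simp only [if_pos, if_neg hac, reduceIte]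
      · exact iff_of_false (by simp [pathGraph_adj]) (fun h => h.1 rfl)
      · refine iff_of_true (by simp [pathGraph_adj]) ⟨Ne.symm hac, Or.inr hfa⟩
      · refine iff_of_true (by simp [pathGraph_adj]) ⟨hac, Or.inl hfa⟩
      · exact iff_of_false (by simp [pathGraph_adj]) (fun h => h.1 rfl)

  · -- two leaves : component is P₃
    obtain ⟨a, b, hab, hlvs⟩ := Set.ncard_eq_two.1 hnl
    have hmema : a ∈ lvs f c := hlvs ▸ (by simp)
    have hmemb : b ∈ lvs f c := hlvs ▸ (by simp)
    obtain ⟨hac, hfa⟩ := hmema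
    obtain ⟨hbc, hfb⟩ := hmemb
    have hcta : ct a = c := hctofc a c hfa
    have hctb : ct b = c := hctofc b c hfb
    have hchar : ∀ v : V, ct v = c ↔ (v = c ∨ v = a ∨ v = b) := by
      intro v
      constructor
      · intro h
        by_cases hvc : v = c
        · exact Or.inl hvc
        · right
          have : v ∈ lvs f c := ⟨hvc, h ▸ hct v⟩
          rwa [hlvs, Set.mem_insert_iff, Set.mem_singleton_iff] at this
      · rintro (rfl | rfl | rfl)
        · exact hcc
        · exact hcta
        · exact hctb
    have hnadjab : ¬ F.Adj a b := by
      rintro ⟨hne, h | h⟩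
      · rw [hfa] at h; exact hbc (Option.some_injective _ h).symm
      · rw [hfb] at h; exact hac (Option.some_injective _ h).symm
    have hnadjba : ¬ F.Adj b a := fun h => hnadjab h.symm
    have hcmem : (⟨c, trivial⟩ : F.verts) ∈ C.supp := (hmemsupp _).2 hcc
    have hamem : (⟨a, trivial⟩ : F.verts) ∈ C.supp := (hmemsupp _).2 hcta
    have hbmem : (⟨b, trivial⟩ : F.verts) ∈ C.supp := (hmemsupp _).2 hctb
    refine ⟨3, by omega, ⟨⟨⟨fun z => if z.1.1 = a then (0 : Fin 3) else if z.1.1 = c then 1 else 2,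
      fun i => if i = 0 then ⟨⟨a, trivial⟩, hamem⟩ else if i = 1 then ⟨⟨c, trivial⟩, hcmem⟩
        else ⟨⟨b, trivial⟩, hbmem⟩, ?_, ?_⟩, ?_⟩⟩⟩
    · intro z
      rcases (hchar z.1.1).1 ((hmemsupp z.1).1 z.2) with h1 | h1 | h1 <;>
        refine Subtype.ext (Subtype.ext ?_) <;>
        simp [h1, Ne.symm hac, Ne.symm hab, hbc]
    · intro i
      fin_cases i
      · simp
      · simp [Ne.symm hac]
      · simp [Ne.symm hab, hbc]
    · intro z z'
      show (pathGraph 3).Adj _ _ ↔ F.Adj z.1.1 z'.1.1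
      simp only [Equiv.coe_fn_mk]
      rcases (hchar z.1.1).1 ((hmemsupp z.1).1 z.2) with h1 | h1 | h1 <;>
        rcases (hchar z'.1.1).1 ((hmemsupp z'.1).1 z'.2) with h2 | h2 | h2 <;>
        rw [h1, h2]
      · exact iff_of_false (by simp [Ne.symm hac, pathGraph_adj]) (fun h => h.1 rfl)
      · exact iff_of_true (by simp [Ne.symm hac, pathGraph_adj]) ⟨Ne.symm hac, Or.inr hfa⟩
      · exact iff_of_true (by simp [Ne.symm hac, Ne.symm hab, hbc, pathGraph_adj])
          ⟨Ne.symm hbc, Or.inr hfb⟩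
      · exact iff_of_true (by simp [Ne.symm hac, pathGraph_adj]) ⟨hac, Or.inl hfa⟩
      · exact iff_of_false (by simp [pathGraph_adj]) (fun h => h.1 rfl)
      · exact iff_of_false (by simp [Ne.symm hab, hbc, pathGraph_adj]) hnadjab
      · exact iff_of_true (by simp [Ne.symm hac, Ne.symm hab, hbc, pathGraph_adj])
          ⟨hbc, Or.inl hfb⟩
      · exact iff_of_false (by simp [Ne.symm hab, hbc, pathGraph_adj]) hnadjba
      · exact iff_of_false (by simp [Ne.symm hab, hbc, pathGraph_adj]) (fun h => h.1 rfl)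


lemma pg_deg1 {k : ℕ} (hk : 2 ≤ k) (i : Fin k) : ∃ j, (pathGraph k).Adj i j := by
  by_cases h : i.val + 1 < k
  · exact ⟨⟨i.val + 1, h⟩, pathGraph_adj.2 (Or.inl rfl)⟩
  · have h2 := i.isLt
    have h1 : i.val + 1 = k := by omega
    refine ⟨⟨i.val - 1, by omega⟩, pathGraph_adj.2 (Or.inr ?_)⟩
    show (i.val - 1) + 1 = i.val
    omega

lemma pg_deg2 {k : ℕ} (i : Fin k) : {j | (pathGraph k).Adj i j}.ncard ≤ 2 := by
  classical
  have hle : {j | (pathGraph k).Adj i j}.ncard ≤ (↑({i.val + 1, i.val - 1} : Finset ℕ) : Set ℕ).ncard := by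
    refine Set.ncard_le_ncard_of_injOn (fun j => j.val) ?_ (Fin.val_injective.injOn) (Set.toFinite _)
    intro j hj
    rcases pathGraph_adj.1 hj with h | h
    · simp only [Finset.coe_insert, Set.mem_insert_iff, Finset.coe_singleton,
        Set.mem_singleton_iff]
      exact Or.inl h.symm
    · simp only [Finset.coe_insert, Set.mem_insert_iff, Finset.coe_singleton,
        Set.mem_singleton_iff]
      right; omega
  calc {j | (pathGraph k).Adj i j}.ncard ≤ _ := hle
    _ = ({i.val + 1, i.val - 1} : Finset ℕ).card := Set.ncard_coe_finset _
    _ ≤ 2 := Finset.card_insert_le _ _ |>.trans (by simp)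

lemma cond_of_hasPathFactor [Fintype V] (h : G.HasPathFactor) :
    ∀ S : Finset V, G.numIsolatedOutside ↑S ≤ 2 * S.card := by
  classical
  obtain ⟨F, hsp, hcomp⟩ := h
  have hmemv : ∀ v : V, v ∈ F.verts := fun v => by rw [hsp]; trivial
  -- degree bounds
  have hFdeg1 : ∀ v : V, ∃ u, F.Adj v u := by
    intro v
    set x : F.verts := ⟨v, hmemv v⟩ with hx
    obtain ⟨k, hk, ⟨φ⟩⟩ := hcomp (F.coe.connectedComponentMk x)
    set x' : (F.coe.connectedComponentMk x).supp := ⟨x, rfl⟩ with hx'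
    obtain ⟨j, hj⟩ := pg_deg1 hk (φ x')
    have hj' : (pathGraph k).Adj (φ x') (φ (φ.symm j)) := by rwa [RelIso.apply_symm_apply]
    have hadj : (F.coe.induce _).Adj x' (φ.symm j) := φ.map_rel_iff.1 hj'
    exact ⟨((φ.symm j).1 : F.verts).1, hadj⟩
  have hFdeg2 : ∀ v : V, {u : V | F.Adj v u}.ncard ≤ 2 := by
    intro v
    set x : F.verts := ⟨v, hmemv v⟩ with hx
    obtain ⟨k, hk, ⟨φ⟩⟩ := hcomp (F.coe.connectedComponentMk x)
    set x' : (F.coe.connectedComponentMk x).supp := ⟨x, rfl⟩ with hx'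
    have hmm : ∀ u : V, F.Adj v u →
        (⟨u, hmemv u⟩ : F.verts) ∈ (F.coe.connectedComponentMk x).supp := by
      intro u hu
      exact ConnectedComponent.sound (Adj.reachable (show F.coe.Adj ⟨u, hmemv u⟩ x from hu.symm))
    set fm : V → Fin k := fun u =>
      if hu : F.Adj v u then φ ⟨⟨u, hmemv u⟩, hmm u hu⟩ else ⟨0, by omega⟩ with hfm
    have hmaps : ∀ u ∈ {u : V | F.Adj v u}, fm u ∈ {j | (pathGraph k).Adj (φ x') j} := by
      intro u hu
      have hu' : F.Adj v u := hu
      simp only [hfm, Set.mem_setOf_eq, dif_pos hu']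
      exact φ.map_rel_iff.2
        (show (F.coe.induce _).Adj x' ⟨⟨u, hmemv u⟩, hmm u hu'⟩ from hu')
    have hinj : Set.InjOn fm {u : V | F.Adj v u} := by
      intro u₁ h₁ u₂ h₂ heq
      have h₁' : F.Adj v u₁ := h₁
      have h₂' : F.Adj v u₂ := h₂
      simp only [hfm, dif_pos h₁', dif_pos h₂'] at heq
      have := φ.injective heq
      exact congrArg (fun z => ((z : (F.coe.connectedComponentMk x).supp).1 : F.verts).1) this
    calc {u : V | F.Adj v u}.ncard ≤ {j | (pathGraph k).Adj (φ x') j}.ncard :=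
          Set.ncard_le_ncard_of_injOn fm hmaps hinj (Set.toFinite _)
      _ ≤ 2 := pg_deg2 _
  -- counting
  intro S
  rw [SimpleGraph.numIsolatedOutside, Nat.card_coe_set_eq]
  set I : Set V := {v | v ∉ (↑S : Set V) ∧ ∀ u, G.Adj v u → u ∈ (↑S : Set V)} with hI
  set If : Finset V := (Set.toFinite I).toFinset with hIf
  choose nb hnb using hFdeg1
  have hnbS : ∀ v ∈ If, nb v ∈ S := by
    intro v hv
    rw [hIf, Set.Finite.mem_toFinset] at hv
    exact hv.2 (nb v) (F.adj_sub (hnb v))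
  have hcards : If.card = ∑ s ∈ S, (If.filter (fun v => nb v = s)).card :=
    Finset.card_eq_sum_card_fiberwise hnbS
  have hfib : ∀ s ∈ S, (If.filter (fun v => nb v = s)).card ≤ 2 := by
    intro s hs
    have hsub : (↑(If.filter (fun v => nb v = s)) : Set V) ⊆ {u : V | F.Adj s u} := by
      intro v hv
      simp only [Finset.coe_filter, Set.mem_setOf_eq] at hv
      exact ((hv.2 ▸ hnb v : F.Adj v s)).symm
    calc (If.filter (fun v => nb v = s)).card
        = (↑(If.filter (fun v => nb v = s)) : Set V).ncard := (Set.ncard_coe_finset _).symm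
      _ ≤ {u : V | F.Adj s u}.ncard := Set.ncard_le_ncard hsub (Set.toFinite _)
      _ ≤ 2 := hFdeg2 s
  have hsum : ∑ s ∈ S, (If.filter (fun v => nb v = s)).card ≤ 2 * S.card := by
    calc ∑ s ∈ S, (If.filter (fun v => nb v = s)).card ≤ ∑ s ∈ S, 2 :=
          Finset.sum_le_sum hfib
      _ = 2 * S.card := by rw [Finset.sum_const, smul_eq_mul, mul_comm]
  have hIcard : I.ncard = If.card := Set.ncard_eq_toFinset_card I (Set.toFinite I)
  omega

end PF

theorem stmt1 {V : Type*} [Fintype V] (G : SimpleGraph V) :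
    G.HasPathFactor ↔ ∀ S : Finset V, G.numIsolatedOutside ↑S ≤ 2 * S.card := by
  constructor
  · exact PF.cond_of_hasPathFactor
  · intro H
    obtain ⟨f, hf, htot⟩ := PF.exists_total H
    exact PF.hasPathFactor_of_sys hf htot
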